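/- arXiv:1508.02793 — 2 statements merged into one kernel-verified Lean document; each statement's English description precedes it below -/
import Mathlib

section
/- For fixed height bound m ≥ 1, define the polynomials P_m(x,t) by P_0 = 1, P_1 = 1 − x, and P_m = (1 − x − x²(t−1))P_{m−1} − (x² + x³(t−1))P_{m−2} for m ≥ 2. Then Σ_{n≥0} Σ_{μ ∈ M_n^m} t^{asc(μ)} x^n = P_m(x,t)/P_{m+1}(x,t) as formal power series. -/
inductive Step : Type
  | U | F | D
  deriving DecidableEq

instance : Fintype Step :=
  ⟨⟨{Step.U, Step.F, Step.D}, by decide⟩, fun x => by cases x <;> decide⟩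

def stepVal : Step → ℤ
  | .U => 1
  | .F => 0
  | .D => -1

/-- Height of the path after the first `i` steps. -/
def ht (p : List Step) (i : ℕ) : ℤ := ((p.take i).map stepVal).sum

/-- A Motzkin path: starts and ends at height 0 and stays nonnegative. -/
def IsMotzkin (p : List Step) : Prop :=
  ht p p.length = 0 ∧ ∀ i ≤ p.length, 0 ≤ ht p i

instance : DecidablePred IsMotzkin := fun p => by
  unfold IsMotzkin; infer_instance

/-- Number of ascents: maximal runs of up steps (counted at their last up step). -/
def asc (p : List Step) : ℕ :=
  ((List.range p.length).filter
    (fun i => p[i]? == some Step.U && p[i+1]? != some Step.U)).length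

/-- Number of occurrences of `w` as a consecutive subword of `p`. -/
def countSubword (w p : List Step) : ℕ :=
  ((List.range p.length).filter (fun i => w.isPrefixOf (p.drop i))).length

/-- Number of plateaus: occurrences of a subword U F^k D for some k ≥ 0. -/
def plt (p : List Step) : ℕ :=
  ((List.range p.length).filter (fun i =>
    (List.range p.length).any (fun k =>
      (Step.U :: (List.replicate k Step.F ++ [Step.D])).isPrefixOf (p.drop i)))).length
open PowerSeries Polynomial

/-- The generating function for Motzkin paths of height bounded by m,
by length (x) and number of ascents (t). -/
noncomputable def FascBdd (m : ℕ) : PowerSeries (Polynomial ℚ) :=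
  PowerSeries.mk fun n =>
    ∑ f : Fin n → Step,
      if IsMotzkin (List.ofFn f) ∧ ∀ i ≤ n, ht (List.ofFn f) i ≤ (m : ℤ) then
        (Polynomial.X : Polynomial ℚ) ^ asc (List.ofFn f)
      else 0

-- ht lemmas
lemma ht_zero (p : List Step) : ht p 0 = 0 := by simp [ht]

lemma ht_nil (i : ℕ) : ht [] i = 0 := by simp [ht]

lemma ht_cons (s : Step) (p : List Step) (i : ℕ) :
    ht (s :: p) (i+1) = stepVal s + ht p i := by
  simp [ht, List.take_succ_cons]

lemma ht_append_left {a b : List Step} {i : ℕ} (h : i ≤ a.length) :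
    ht (a ++ b) i = ht a i := by
  simp [ht, List.take_append_of_le_length h]

lemma ht_take (a : List Step) (k i : ℕ) (h : i ≤ k) :
    ht (a.take k) i = ht a i := by
  simp [ht, List.take_take, Nat.min_eq_left h]

lemma ht_append_right (a b : List Step) (i : ℕ) :
    ht (a ++ b) (a.length + i) = ht a a.length + ht b i := by
  simp [ht, List.take_append, List.take_of_length_le]

lemma ht_succ (p : List Step) (i : ℕ) (h : i < p.length) :
    ht p (i+1) = ht p i + stepVal (p[i]) := by
  unfold ht
  rw [List.take_succ, List.getElem?_eq_getElem h, List.map_append, List.sum_append]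
  simp

lemma ht_drop (p : List Step) (k i : ℕ) (h : k ≤ p.length) :
    ht (p.drop k) i = ht p (k + i) - ht p k := by
  have h1 := ht_append_right (p.take k) (p.drop k) i
  rw [List.take_append_drop] at h1
  rw [List.length_take, Nat.min_eq_left h] at h1
  rw [ht_take _ _ _ (le_refl k)] at h1
  omega

-- asc lemmas
lemma asc_cons (s : Step) (p : List Step) :
    asc (s :: p) = (if s = Step.U ∧ p.head? ≠ some Step.U then 1 else 0) + asc p := by
  unfold asc
  simp only [List.length_cons, List.range_succ_eq_map, List.filter_cons,
    List.filter_map, List.length_cons]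
  have h1 : ∀ i : ℕ, ((s :: p)[i+1]? == some Step.U && (s :: p)[i+2]? != some Step.U)
      = (p[i]? == some Step.U && p[i+1]? != some Step.U) := by
    intro i; rw [List.getElem?_cons_succ, List.getElem?_cons_succ]
  have h2 : ((fun i => (s :: p)[i]? == some Step.U && (s :: p)[i+1]? != some Step.U) ∘ (· + 1))
      = (fun i => p[i]? == some Step.U && p[i+1]? != some Step.U) := by
    funext i; simp only [Function.comp]; exact h1 i
  rw [h2]
  have h0 : ((s :: p)[0]? == some Step.U && (s :: p)[0+1]? != some Step.U)
      = decide (s = Step.U ∧ p.head? ≠ some Step.U) := by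
    rcases p with _ | ⟨a, q⟩ <;> cases s <;> (try cases a) <;> simp
  rw [h0]
  by_cases hc : s = Step.U ∧ p.head? ≠ some Step.U <;> simp [hc, List.length_map] <;> omega

lemma asc_append {q : List Step} (r : List Step) (h : q.getLast? ≠ some Step.U) :
    asc (q ++ r) = asc q + asc r := by
  induction q with
  | nil => simp [asc]
  | cons s q' ih =>
    rcases q' with _ | ⟨a, q''⟩
    · simp only [List.getLast?_singleton] at h
      have hs : s ≠ Step.U := by intro hs; exact h (by rw [hs])
      rw [List.singleton_append, asc_cons]
      have : asc [s] = 0 := by cases s <;> simp [asc] <;> simp_all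
      rw [this]
      simp [hs]
    · have hlast : (a :: q'').getLast? ≠ some Step.U := by
        rwa [List.getLast?_cons_cons] at h
      have := ih hlast
      rw [List.cons_append, asc_cons, asc_cons, this]
      simp only [List.cons_append, List.head?_cons]
      by_cases hc : s = Step.U ∧ some a ≠ some Step.U <;> simp only [hc, if_true, if_false] <;> omega

lemma asc_concat (p : List Step) (s : Step) (hs : s ≠ Step.U) :
    asc (p ++ [s]) = asc p := by
  induction p with
  | nil => cases s <;> simp [asc] <;> simp_all
  | cons a p' ih =>
    rw [List.cons_append, asc_cons, asc_cons, ih]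
    rcases p' with _ | ⟨b, q⟩
    · simp only [List.nil_append, List.head?_cons, List.head?_nil]
      have : (some s ≠ some Step.U) := by simpa using hs
      simp [this]
    · simp

lemma motzkin_getLast_ne_U {q : List Step} (hq : IsMotzkin q) :
    q.getLast? ≠ some Step.U := by
  intro h
  obtain ⟨l, rfl⟩ := List.getLast?_eq_some_iff.mp h
  obtain ⟨h0, hpos⟩ := hq
  have h1 : ht (l ++ [Step.U]) (l.length + 1) = ht l l.length + 1 := by
    have := ht_append_right l [Step.U] 1
    simpa [ht, stepVal] using this
  have h2 : ht (l ++ [Step.U]) l.length = ht l l.length := ht_append_left (le_refl _)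
  have h3 : 0 ≤ ht (l ++ [Step.U]) l.length := hpos _ (by simp)
  simp only [List.length_append, List.length_singleton] at h0
  omega



def Bdd (m : ℕ) (p : List Step) : Prop :=
  IsMotzkin p ∧ ∀ i ≤ p.length, ht p i ≤ (m : ℤ)

instance : ∀ m, DecidablePred (Bdd m) := fun m p => by
  unfold Bdd; infer_instance

def LS (n : ℕ) : Finset (List Step) := Finset.univ.image (List.ofFn (n := n))

lemma mem_LS {n : ℕ} {p : List Step} : p ∈ LS n ↔ p.length = n := by
  constructor
  · intro h
    obtain ⟨f, _, rfl⟩ := Finset.mem_image.mp h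
    simp
  · rintro rfl
    exact Finset.mem_image.mpr ⟨fun i => p.get i, Finset.mem_univ _, by simp⟩

noncomputable def Fse (m : ℕ) : PowerSeries (Polynomial ℚ) :=
  PowerSeries.mk fun n => ∑ p ∈ (LS n).filter (Bdd m), (Polynomial.X : Polynomial ℚ) ^ asc p

noncomputable def Sse (m : ℕ) : PowerSeries (Polynomial ℚ) :=
  PowerSeries.mk fun n =>
    ∑ p ∈ (LS n).filter (fun p => Bdd m p ∧ p.head? = some Step.U),
      (Polynomial.X : Polynomial ℚ) ^ asc p

noncomputable def Gse (m : ℕ) : PowerSeries (Polynomial ℚ) :=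
  PowerSeries.mk fun n =>
    ∑ q ∈ (LS n).filter (Bdd m),
      (Polynomial.X : Polynomial ℚ) ^ (asc q + if q.head? = some Step.U then 0 else 1)

lemma FascBdd_eq_Fse (m : ℕ) : FascBdd m = Fse m := by
  apply PowerSeries.ext; intro n
  simp only [FascBdd, Fse, coeff_mk]
  rw [Finset.sum_filter, LS, Finset.sum_image (fun x _ y _ h => List.ofFn_injective h)]
  refine Finset.sum_congr rfl fun f _ => ?_
  simp [Bdd]

lemma bdd_nil (m : ℕ) : Bdd m [] :=
  ⟨⟨by simp [ht], fun i _ => by simp [ht]⟩, fun i _ => by simp [ht]⟩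

lemma bdd_cons_F {m : ℕ} {r : List Step} : Bdd m (Step.F :: r) ↔ Bdd m r := by
  constructor
  · rintro ⟨⟨h0, hnn⟩, hub⟩
    refine ⟨⟨?_, fun i hi => ?_⟩, fun i hi => ?_⟩
    · have := h0; rw [List.length_cons, ht_cons] at this; simpa [stepVal] using this
    · have := hnn (i+1) (by simpa using Nat.succ_le_succ hi)
      rw [ht_cons] at this; simpa [stepVal] using this
    · have := hub (i+1) (by simpa using Nat.succ_le_succ hi)
      rw [ht_cons] at this; simpa [stepVal] using this
  · rintro ⟨⟨h0, hnn⟩, hub⟩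
    refine ⟨⟨?_, fun i hi => ?_⟩, fun i hi => ?_⟩
    · rw [List.length_cons, ht_cons]; simpa [stepVal] using h0
    · cases i with
      | zero => simp [ht]
      | succ j =>
        rw [ht_cons]
        have := hnn j (by simpa using hi)
        simpa [stepVal] using this
    · cases i with
      | zero => simp [ht]
      | succ j =>
        rw [ht_cons]
        have := hub j (by simpa using hi)
        simpa [stepVal] using this

lemma bdd_head_ne_D {m : ℕ} {p : List Step} (h : Bdd m p) : p.head? ≠ some Step.D := by
  rcases p with _ | ⟨s, t⟩
  · simp
  · intro he
    have hs : s = Step.D := by simpa using he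
    subst hs
    have := h.1.2 1 (by simp)
    rw [show (1:ℕ) = 0 + 1 from rfl, ht_cons] at this
    simp [stepVal, ht] at this

lemma LS_zero : LS 0 = {[]} := by
  ext p; simp [mem_LS, List.length_eq_zero_iff]

lemma relA (m : ℕ) : Fse m = 1 + PowerSeries.X * Fse m + Sse m := by
  apply PowerSeries.ext; intro n
  rw [map_add, map_add]
  cases n with
  | zero =>
    simp only [Fse, Sse, coeff_mk, PowerSeries.coeff_zero_eq_constantCoeff, map_one, map_mul,
      PowerSeries.constantCoeff_X, zero_mul, LS_zero]
    rw [Finset.filter_singleton, Finset.filter_singleton]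
    have h1 : Bdd m [] := bdd_nil m
    have h2 : ¬ (Bdd m [] ∧ ([] : List Step).head? = some Step.U) := by simp
    simp [h1, h2, asc]
  | succ n =>
    rw [PowerSeries.coeff_succ_X_mul]
    have hone : (PowerSeries.coeff (R := Polynomial ℚ) (n+1)) 1 = 0 := by
      simp [PowerSeries.coeff_one]
    rw [hone, zero_add]
    simp only [Fse, Sse, coeff_mk]
    rw [← Finset.sum_filter_add_sum_filter_not ((LS (n+1)).filter (Bdd m))
      (fun p => p.head? = some Step.F)]
    congr 1
    · -- F-headed paths ↔ paths of length n
      refine Finset.sum_bij' (fun p _ => p.tail) (fun r _ => Step.F :: r) ?_ ?_ ?_ ?_ ?_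
      · intro p hp
        simp only [Finset.mem_filter, mem_LS] at hp ⊢
        obtain ⟨⟨hlen, hbdd⟩, hhead⟩ := hp
        rcases p with _ | ⟨s, t⟩
        · simp at hlen
        · simp only [List.head?_cons, Option.some_inj] at hhead
          subst hhead
          exact ⟨by simpa using hlen, bdd_cons_F.mp hbdd⟩
      · intro r hr
        simp only [Finset.mem_filter, mem_LS] at hr ⊢
        exact ⟨⟨by simp [hr.1], bdd_cons_F.mpr hr.2⟩, rfl⟩
      · intro p hp
        simp only [Finset.mem_filter, mem_LS] at hp
        obtain ⟨⟨hlen, hbdd⟩, hhead⟩ := hp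
        rcases p with _ | ⟨s, t⟩
        · simp at hlen
        · simp only [List.head?_cons, Option.some_inj] at hhead
          subst hhead; rfl
      · intro r _; rfl
      · intro p hp
        simp only [Finset.mem_filter, mem_LS] at hp
        obtain ⟨⟨hlen, hbdd⟩, hhead⟩ := hp
        rcases p with _ | ⟨s, t⟩
        · simp at hlen
        · simp only [List.head?_cons, Option.some_inj] at hhead
          subst hhead
          simp [asc_cons]
    · -- non-F-headed = U-headed
      apply Finset.sum_congr _ (fun _ _ => rfl)
      ext p
      simp only [Finset.mem_filter, mem_LS]
      constructor
      · rintro ⟨⟨hlen, hbdd⟩, hne⟩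
        refine ⟨hlen, hbdd, ?_⟩
        rcases p with _ | ⟨s, t⟩
        · simp at hlen
        · have hd := bdd_head_ne_D hbdd
          cases s
          · rfl
          · simp at hne
          · simp at hd
      · rintro ⟨hlen, hbdd, hhead⟩
        exact ⟨⟨hlen, hbdd⟩, by rw [hhead]; simp⟩

lemma GseEq (m : ℕ) :
    Gse m = (PowerSeries.C (R := Polynomial ℚ)) Polynomial.X * Fse m
      - ((PowerSeries.C (R := Polynomial ℚ)) Polynomial.X - 1) * Sse m := by
  apply PowerSeries.ext; intro n
  rw [map_sub, sub_mul, map_sub, one_mul, PowerSeries.coeff_C_mul, PowerSeries.coeff_C_mul]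
  simp only [Gse, Fse, Sse, coeff_mk]
  have hfs : (LS n).filter (fun p => Bdd m p ∧ p.head? = some Step.U)
      = ((LS n).filter (Bdd m)).filter (fun p => p.head? = some Step.U) := by
    rw [Finset.filter_filter]
  rw [hfs]
  set A := (LS n).filter (Bdd m) with hA
  set B := A.filter (fun p => p.head? = some Step.U) with hB
  set Cc := A.filter (fun p => ¬ p.head? = some Step.U) with hC
  have split1 : ∑ q ∈ A, (Polynomial.X : Polynomial ℚ) ^ (asc q + if q.head? = some Step.U then 0 else 1)
      = (∑ q ∈ B, (Polynomial.X : Polynomial ℚ) ^ (asc q + if q.head? = some Step.U then 0 else 1))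
        + ∑ q ∈ Cc, (Polynomial.X : Polynomial ℚ) ^ (asc q + if q.head? = some Step.U then 0 else 1) :=
    (Finset.sum_filter_add_sum_filter_not A _ _).symm
  have split2 : ∑ q ∈ A, (Polynomial.X : Polynomial ℚ) ^ asc q
      = (∑ q ∈ B, (Polynomial.X : Polynomial ℚ) ^ asc q)
        + ∑ q ∈ Cc, (Polynomial.X : Polynomial ℚ) ^ asc q :=
    (Finset.sum_filter_add_sum_filter_not A _ _).symm
  have c1 : ∑ q ∈ B, (Polynomial.X : Polynomial ℚ) ^ (asc q + if q.head? = some Step.U then 0 else 1)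
      = ∑ q ∈ B, (Polynomial.X : Polynomial ℚ) ^ asc q := by
    refine Finset.sum_congr rfl fun q hq => ?_
    have := (Finset.mem_filter.mp hq).2
    simp [this]
  have c2 : ∑ q ∈ Cc, (Polynomial.X : Polynomial ℚ) ^ (asc q + if q.head? = some Step.U then 0 else 1)
      = ∑ q ∈ Cc, (Polynomial.X : Polynomial ℚ) ^ (asc q + 1) := by
    refine Finset.sum_congr rfl fun q hq => ?_
    have := (Finset.mem_filter.mp hq).2
    simp [this]
  have hXC : Polynomial.X * ∑ q ∈ Cc, (Polynomial.X : Polynomial ℚ) ^ asc q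
      = ∑ q ∈ Cc, (Polynomial.X : Polynomial ℚ) ^ (asc q + 1) := by
    rw [Finset.mul_sum]
    exact Finset.sum_congr rfl fun q _ => by rw [pow_succ, mul_comm]
  rw [split1, split2, c1, c2, ← hXC]
  ring

lemma comp_eq (q r : List Step) :
    Step.U :: q ++ Step.D :: r = (Step.U :: q) ++ (Step.D :: r) := rfl

lemma ht_comp_left (q r : List Step) (i : ℕ) (h : i ≤ q.length) :
    ht (Step.U :: q ++ Step.D :: r) (i+1) = 1 + ht q i := by
  rw [comp_eq, ht_append_left (by simp; omega), ht_cons]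
  simp [stepVal]

lemma ht_comp_right (q r : List Step) (hq0 : ht q q.length = 0) (j : ℕ) :
    ht (Step.U :: q ++ Step.D :: r) (q.length + 1 + j) = 1 + ht (Step.D :: r) j := by
  have h := ht_append_right (Step.U :: q) (Step.D :: r) j
  rw [comp_eq]
  rw [List.length_cons] at h
  rw [h, ht_cons, hq0]
  simp [stepVal]

lemma ht_D_cons (r : List Step) (i : ℕ) : ht (Step.D :: r) (i+1) = -1 + ht r i := by
  rw [ht_cons]; simp [stepVal]

lemma bdd_comp {m : ℕ} {q r : List Step} (hq : Bdd m q) (hr : Bdd (m+1) r) :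
    Bdd (m+1) (Step.U :: q ++ Step.D :: r) := by
  have hq0 : ht q q.length = 0 := hq.1.1
  have hlen : (Step.U :: q ++ Step.D :: r).length = q.length + r.length + 2 := by
    simp; omega
  refine ⟨⟨?_, fun i hi => ?_⟩, fun i hi => ?_⟩
  · rw [hlen, show q.length + r.length + 2 = q.length + 1 + (r.length + 1) from by omega,
      ht_comp_right q r hq0, ht_D_cons]
    have := hr.1.1
    omega
  · rw [hlen] at hi
    rcases Nat.eq_zero_or_pos i with rfl | hipos
    · simp [ht]
    obtain ⟨i', rfl⟩ : ∃ i', i = i' + 1 := ⟨i - 1, by omega⟩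
    by_cases hle : i' ≤ q.length
    · rw [ht_comp_left q r i' hle]
      have := hq.1.2 i' hle
      omega
    · obtain ⟨j, hj⟩ : ∃ j, i' + 1 = q.length + 1 + (j + 1) := ⟨i' - q.length - 1, by omega⟩
      rw [hj, ht_comp_right q r hq0 (j+1), ht_D_cons]
      have := hr.1.2 j (by omega)
      omega
  · rw [hlen] at hi
    push_cast
    rcases Nat.eq_zero_or_pos i with rfl | hipos
    · simp [ht]; positivity
    obtain ⟨i', rfl⟩ : ∃ i', i = i' + 1 := ⟨i - 1, by omega⟩
    by_cases hle : i' ≤ q.length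
    · rw [ht_comp_left q r i' hle]
      have := hq.2 i' hle
      omega
    · obtain ⟨j, hj⟩ : ∃ j, i' + 1 = q.length + 1 + (j + 1) := ⟨i' - q.length - 1, by omega⟩
      rw [hj, ht_comp_right q r hq0 (j+1), ht_D_cons]
      have := hr.2 j (by omega)
      push_cast at this
      omega

lemma asc_comp {q : List Step} (r : List Step) (hq : IsMotzkin q) :
    asc (Step.U :: q ++ Step.D :: r)
      = asc q + asc r + (if q.head? = some Step.U then 0 else 1) := by
  have h1 : asc (q ++ Step.D :: r) = asc q + asc (Step.D :: r) :=
    asc_append (Step.D :: r) (motzkin_getLast_ne_U hq)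
  have h2 : asc (Step.D :: r) = asc r := by rw [asc_cons]; simp
  rw [show Step.U :: q ++ Step.D :: r = Step.U :: (q ++ Step.D :: r) from rfl,
    asc_cons, h1, h2]
  rcases q with _ | ⟨a, t⟩
  · simp; omega
  · by_cases ha : a = Step.U
    · subst ha; simp
    · have : (some a ≠ some Step.U) := by simpa using ha
      simp [ha, this]
      omega

lemma decomp {m n : ℕ} {p : List Step} (hp : Bdd (m+1) p) (hlen : p.length = n+2)
    (hhead : p.head? = some Step.U) :
    ∃ q r, Bdd m q ∧ Bdd (m+1) r ∧ p = Step.U :: q ++ Step.D :: r := by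
  rcases p with _ | ⟨s, t⟩
  · simp at hlen
  have hs : s = Step.U := by simpa using hhead
  subst hs
  have hts : t.length = n + 1 := by simpa using hlen
  -- first return
  have hex : ∃ j, ht (Step.U :: t) (j+1) = 0 ∧ j ≤ n + 1 :=
    ⟨n+1, by
      have := hp.1.1
      rw [hlen] at this
      exact ⟨this, le_refl _⟩⟩
  classical
  set k := Nat.find hex with hk
  obtain ⟨hk0, hkle⟩ := Nat.find_spec hex
  rw [← hk] at hk0 hkle
  have hmin : ∀ j, j < k → 1 ≤ ht (Step.U :: t) (j+1) := by
    intro j hj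
    have hne := Nat.find_min hex hj
    have hle : j ≤ n + 1 := by omega
    have hnn : 0 ≤ ht (Step.U :: t) (j+1) := hp.1.2 (j+1) (by omega)
    by_contra hc
    push_neg at hc
    exact hne ⟨by omega, hle⟩
  have hk1 : 1 ≤ k := by
    by_contra hc
    push_neg at hc
    have hke : k = 0 := by omega
    rw [hke, ht_cons] at hk0
    simp [stepVal, ht] at hk0
  have hhtk : 1 ≤ ht (Step.U :: t) k := by
    have := hmin (k-1) (by omega)
    rwa [show k - 1 + 1 = k from by omega] at this
  have hgetD : (Step.U :: t)[k]'(by simp; omega) = Step.D := by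
    have hstep := ht_succ (Step.U :: t) k (by simp; omega)
    rw [hk0] at hstep
    rcases hget : (Step.U :: t)[k]'(by simp; omega) with _ | _ | _ <;>
      rw [hget] at hstep <;> simp [stepVal] at hstep <;> omega
  refine ⟨t.take (k-1), t.drop k, ?_, ?_, ?_⟩
  · -- Bdd m q
    have hqlen : (t.take (k-1)).length = k - 1 := by
      rw [List.length_take]; omega
    have hhtq : ∀ i ≤ k - 1, ht (t.take (k-1)) i = ht (Step.U :: t) (i+1) - 1 := by
      intro i hi
      rw [ht_take t (k-1) i hi, ht_cons]
      simp [stepVal]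
    have hhtpk : ht (Step.U :: t) k = 1 := by
      have hstep := ht_succ (Step.U :: t) k (by simp; omega)
      rw [hk0, hgetD] at hstep
      simp [stepVal] at hstep
      omega
    refine ⟨⟨?_, fun i hi => ?_⟩, fun i hi => ?_⟩
    · rw [hqlen, hhtq (k-1) (le_refl _), show k - 1 + 1 = k from by omega, hhtpk]
      ring
    · rw [hqlen] at hi
      rw [hhtq i hi]
      have := hmin i (by omega)
      omega
    · rw [hqlen] at hi
      rw [hhtq i hi]
      have := hp.2 (i+1) (by rw [hlen]; omega)
      push_cast at this ⊢
      omega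
  · -- Bdd (m+1) r
    have hrlen : (t.drop k).length = n + 1 - k := by
      rw [List.length_drop]; omega
    have hhtr : ∀ i, ht (t.drop k) i = ht (Step.U :: t) (k + 1 + i) := by
      intro i
      have e1 : ht (Step.U :: t) (k+1+i) = 1 + ht t (k+i) := by
        rw [show k+1+i = (k+i)+1 from by omega, ht_cons]; simp [stepVal]
      have e2 : 1 + ht t k = 0 := by
        have hk0' := hk0
        rw [ht_cons] at hk0'
        simp [stepVal] at hk0'
        omega
      rw [ht_drop t k i (by omega), e1]
      omega
    refine ⟨⟨?_, fun i hi => ?_⟩, fun i hi => ?_⟩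
    · rw [hrlen, hhtr]
      rw [show k + 1 + (n + 1 - k) = n + 2 from by omega]
      have := hp.1.1
      rwa [hlen] at this
    · rw [hhtr]
      exact hp.1.2 _ (by rw [hlen]; omega)
    · rw [hhtr]
      have := hp.2 (k+1+i) (by rw [hlen]; rw [hrlen] at hi; omega)
      push_cast at this ⊢
      omega
  · -- decomposition equality
    have hdrop : t.drop (k-1) = Step.D :: t.drop k := by
      have hklt : k - 1 < t.length := by omega
      rw [List.drop_eq_getElem_cons hklt]
      have h2 : (Step.U :: t)[k]? = some Step.D := by
        rw [List.getElem?_eq_getElem (by simp; omega), hgetD]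
      rw [show k = (k-1)+1 from by omega, List.getElem?_cons_succ] at h2
      rw [List.getElem?_eq_getElem hklt] at h2
      have h3 : t[k-1]'hklt = Step.D := by simpa using h2
      rw [h3, show k - 1 + 1 = k from by omega]
    conv_lhs => rw [← List.take_append_drop (k-1) t]
    rw [hdrop]
    rfl

lemma comp_len_lt {q q' r r' : List Step} (hq : IsMotzkin q) (hq' : IsMotzkin q')
    (hlt : q.length < q'.length)
    (h : Step.U :: q ++ Step.D :: r = Step.U :: q' ++ Step.D :: r') : False := by
  have h1 : ht (Step.U :: q ++ Step.D :: r) (q.length + 1 + 1) = 0 := by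
    rw [ht_comp_right q r hq.1 1, ht_D_cons, ht_zero]
    ring
  have h2 : 1 ≤ ht (Step.U :: q' ++ Step.D :: r') (q.length + 1 + 1) := by
    rw [show q.length + 1 + 1 = (q.length + 1) + 1 from rfl,
      ht_comp_left q' r' (q.length + 1) (by omega)]
    have := hq'.2 (q.length + 1) (by omega)
    omega
  rw [h] at h1
  omega

lemma comp_inj {q r q' r' : List Step} (hq : IsMotzkin q) (hq' : IsMotzkin q')
    (h : Step.U :: q ++ Step.D :: r = Step.U :: q' ++ Step.D :: r') :
    q = q' ∧ r = r' := by
  have hlen : q.length = q'.length := by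
    rcases lt_trichotomy q.length q'.length with hlt | heq | hgt
    · exact absurd (comp_len_lt hq hq' hlt h) (fun x => x)
    · exact heq
    · exact absurd (comp_len_lt hq' hq hgt h.symm) (fun x => x)
  have h2 : q ++ Step.D :: r = q' ++ Step.D :: r' := by
    injection h
  obtain ⟨hq, hr⟩ := List.append_inj h2 hlen
  exact ⟨hq, by injection hr⟩

lemma relB (m : ℕ) :
    Sse (m+1) = PowerSeries.X ^ 2 * (Gse m * Fse (m+1)) := by
  apply PowerSeries.ext; intro n
  match n with
  | 0 =>
    have hr : (PowerSeries.coeff (R := Polynomial ℚ) 0)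
        (PowerSeries.X ^ 2 * (Gse m * Fse (m+1))) = 0 := by
      rw [PowerSeries.coeff_zero_eq_constantCoeff, map_mul, map_pow,
        PowerSeries.constantCoeff_X]
      ring
    rw [hr]
    simp only [Sse, coeff_mk, LS_zero, Finset.filter_singleton]
    have h2 : ¬ (Bdd (m+1) [] ∧ ([] : List Step).head? = some Step.U) := by simp
    simp [h2]
  | 1 =>
    have hr : (PowerSeries.coeff (R := Polynomial ℚ) 1)
        (PowerSeries.X ^ 2 * (Gse m * Fse (m+1))) = 0 := by
      rw [show (2:ℕ) = 1 + 1 from rfl, pow_succ, pow_one, mul_assoc,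
        PowerSeries.coeff_succ_X_mul, PowerSeries.coeff_zero_eq_constantCoeff,
        map_mul, PowerSeries.constantCoeff_X]
      ring
    rw [hr]
    simp only [Sse, coeff_mk]
    rw [Finset.sum_eq_zero]
    intro p hp
    simp only [Finset.mem_filter, mem_LS] at hp
    obtain ⟨hlen, hbdd, hhead⟩ := hp
    exfalso
    rcases p with _ | ⟨s, t⟩
    · simp at hlen
    · have hs : s = Step.U := by simpa using hhead
      subst hs
      have ht0 : t = [] := by
        simpa using List.length_eq_zero_iff.mp (by simpa using hlen)
      subst ht0
      have := hbdd.1.1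
      simp [ht, stepVal] at this
  | (n+2) =>
    rw [show n + 2 = n + 2 from rfl]
    rw [show ((PowerSeries.coeff (R := Polynomial ℚ) (n+2)))
        (PowerSeries.X ^ 2 * (Gse m * Fse (m+1)))
      = (PowerSeries.coeff (R := Polynomial ℚ) n) (Gse m * Fse (m+1)) from
        PowerSeries.coeff_X_pow_mul _ 2 n]
    rw [PowerSeries.coeff_mul]
    simp only [Gse, Fse, Sse, coeff_mk]
    have hexp : ∀ ab : ℕ × ℕ,
        (∑ q ∈ (LS ab.1).filter (Bdd m),
          (Polynomial.X : Polynomial ℚ) ^ (asc q + if q.head? = some Step.U then 0 else 1))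
        * (∑ r ∈ (LS ab.2).filter (Bdd (m+1)), (Polynomial.X : Polynomial ℚ) ^ asc r)
        = ∑ x ∈ ((LS ab.1).filter (Bdd m)) ×ˢ ((LS ab.2).filter (Bdd (m+1))),
            (Polynomial.X : Polynomial ℚ) ^
              (asc x.1 + (if x.1.head? = some Step.U then 0 else 1) + asc x.2) := by
      intro ab
      rw [Finset.sum_mul_sum, ← Finset.sum_product']
      exact Finset.sum_congr rfl fun x _ => by rw [← pow_add]
    rw [Finset.sum_congr rfl (fun ab _ => hexp ab)]
    rw [Finset.sum_sigma' (Finset.HasAntidiagonal.antidiagonal n)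
      (fun ab => ((LS ab.1).filter (Bdd m)) ×ˢ ((LS ab.2).filter (Bdd (m+1))))
      (fun ab x => (Polynomial.X : Polynomial ℚ) ^
        (asc x.1 + (if x.1.head? = some Step.U then 0 else 1) + asc x.2))]
    symm
    refine Finset.sum_bij
      (fun x _ => Step.U :: x.2.1 ++ Step.D :: x.2.2) ?_ ?_ ?_ ?_
    · -- maps into target
      rintro ⟨⟨a, b⟩, q, r⟩ hx
      simp only [Finset.mem_sigma, Finset.mem_product, Finset.mem_filter,
        Finset.HasAntidiagonal.mem_antidiagonal, mem_LS] at hx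
      obtain ⟨hab, ⟨hqlen, hqbdd⟩, hrlen, hrbdd⟩ := hx
      simp only [Finset.mem_filter, mem_LS]
      refine ⟨?_, bdd_comp hqbdd hrbdd, rfl⟩
      simp only [List.length_cons, List.length_append, List.length_cons]
      omega
    · -- injective
      rintro ⟨⟨a, b⟩, q, r⟩ hx ⟨⟨a', b'⟩, q', r'⟩ hx' heq
      simp only [Finset.mem_sigma, Finset.mem_product, Finset.mem_filter,
        Finset.HasAntidiagonal.mem_antidiagonal, mem_LS] at hx hx'
      obtain ⟨hab, ⟨hqlen, hqbdd⟩, hrlen, hrbdd⟩ := hx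
      obtain ⟨hab', ⟨hqlen', hqbdd'⟩, hrlen', hrbdd'⟩ := hx'
      obtain ⟨hqq, hrr⟩ := comp_inj hqbdd.1 hqbdd'.1 heq
      subst hqq; subst hrr
      have : a = a' := by omega
      subst this
      have : b = b' := by omega
      subst this
      rfl
    · -- surjective
      rintro p hp
      simp only [Finset.mem_filter, mem_LS] at hp
      obtain ⟨hlen, hbdd, hhead⟩ := hp
      obtain ⟨q, r, hq, hr, rfl⟩ := decomp hbdd hlen hhead
      have hlen' : q.length + r.length = n := by
        simp only [List.length_cons, List.length_append, List.length_cons] at hlen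
        omega
      refine ⟨⟨⟨q.length, r.length⟩, q, r⟩, ?_, rfl⟩
      simp only [Finset.mem_sigma, Finset.mem_product, Finset.mem_filter,
        Finset.HasAntidiagonal.mem_antidiagonal, mem_LS]
      refine ⟨hlen', ⟨?_, hq⟩, ?_, hr⟩ <;> trivial
    · -- weights
      rintro ⟨⟨a, b⟩, q, r⟩ hx
      simp only [Finset.mem_sigma, Finset.mem_product, Finset.mem_filter,
        Finset.HasAntidiagonal.mem_antidiagonal, mem_LS] at hx
      obtain ⟨hab, ⟨hqlen, hqbdd⟩, hrlen, hrbdd⟩ := hx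
      dsimp only
      rw [asc_comp r hqbdd.1]
      congr 1
      omega

lemma Sse_zero : Sse 0 = 0 := by
  apply PowerSeries.ext; intro n
  simp only [Sse, coeff_mk, map_zero]
  have he : (LS n).filter (fun p => Bdd 0 p ∧ p.head? = some Step.U) = ∅ := by
    apply Finset.eq_empty_of_forall_notMem
    rintro p hp
    simp only [Finset.mem_filter, mem_LS] at hp
    obtain ⟨hlen, hbdd, hhead⟩ := hp
    rcases p with _ | ⟨s, t⟩
    · simp at hhead
    · have hs : s = Step.U := by simpa using hhead
      subst hs
      have h1 := hbdd.2 1 (by simp)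
      rw [show (1:ℕ) = 0+1 from rfl, ht_cons] at h1
      simp [stepVal, ht] at h1
  rw [he, Finset.sum_empty]

lemma main_ind (P : ℕ → PowerSeries (Polynomial ℚ))
    (hP0 : P 0 = 1) (hP1 : P 1 = 1 - PowerSeries.X)
    (hPrec : ∀ m, P (m + 2) =
      (1 - PowerSeries.X - PowerSeries.X ^ 2
          * ((PowerSeries.C (R := Polynomial ℚ)) Polynomial.X - 1)) * P (m + 1)
        - (PowerSeries.X ^ 2 + PowerSeries.X ^ 3
          * ((PowerSeries.C (R := Polynomial ℚ)) Polynomial.X - 1)) * P m) :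
    ∀ m, Fse m * P (m + 1) = P m := by
  intro m
  induction m with
  | zero =>
    rw [hP1, hP0]
    have h := relA 0
    rw [Sse_zero, add_zero] at h
    linear_combination h
  | succ k ih =>
    show Fse (k+1) * P (k+2) = P (k+1)
    have hA1 := relA (k+1)
    have hB := relB k
    have hG := GseEq k
    have hA0 := relA k
    have hP := hPrec k
    set c := (PowerSeries.C (R := Polynomial ℚ)) Polynomial.X with hc
    set Xs := (PowerSeries.X : PowerSeries (Polynomial ℚ)) with hX
    linear_combination (Fse (k+1)) * hP
      + ((Xs^2 + Xs^3*(c-1)) * Fse (k+1)) * ih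
      + (P (k+1)) * hA1
      + (P (k+1)) * hB
      + (Xs^2 * Fse (k+1) * P (k+1)) * hG
      + ((c-1) * Xs^2 * Fse (k+1) * P (k+1)) * hA0


/-- With P₀ = 1, P₁ = 1 − x, P\_m = (1 − x − x²(t−1))P\_{m−1} − (x² + x³(t−1))P\_{m−2},
the ascent generating function for Motzkin paths of height at most m equals
P\_m / P\_{m+1}, i.e. F\_m · P\_{m+1} = P\_m. -/
theorem bounded_ascents_eq_ratio (P : ℕ → PowerSeries (Polynomial ℚ))
    (hP0 : P 0 = 1) (hP1 : P 1 = 1 - PowerSeries.X)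
    (hPrec : ∀ m, P (m + 2) =
      (1 - PowerSeries.X - PowerSeries.X ^ 2
          * ((PowerSeries.C (R := Polynomial ℚ)) Polynomial.X - 1)) * P (m + 1)
        - (PowerSeries.X ^ 2 + PowerSeries.X ^ 3
          * ((PowerSeries.C (R := Polynomial ℚ)) Polynomial.X - 1)) * P m)
    (m : ℕ) (hm : 1 ≤ m) :
    FascBdd m * P (m + 1) = P m := by
  rw [FascBdd_eq_Fse]
  exact main_ind P hP0 hP1 hPrec m
end

section
/- The generating function F(x) = Σ_n M_n^{(0)} x^n for Motzkin paths with no peaks (no occurrence of UD) satisfies x²F² − (1 − x + x²)F + 1 = 0; its coefficients begin 1, 1, 1, 2, 4, 8, 17, 37, 82, 185. -/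
/-- Number of peakless Motzkin paths (no occurrence of UD) of length n. -/
noncomputable def peakless (n : ℕ) : ℕ :=
  Nat.card {p : List Step // p.length = n ∧ IsMotzkin p ∧
    countSubword [Step.U, Step.D] p = 0}

/-- Their generating function F(x) = Σ_n peakless n · xⁿ. -/
noncomputable def Fpeakless : PowerSeries ℚ :=
  PowerSeries.mk fun n => (peakless n : ℚ)

/-! ### Auxiliary development -/

open List Finset

namespace PeaklessAux

def val (l : List Step) : ℤ := (l.map stepVal).sum

@[simp] lemma val_nil : val [] = 0 := rfl
@[simp] lemma val_cons (a : Step) (l : List Step) : val (a :: l) = stepVal a + val l := by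
  simp [val]
@[simp] lemma val_append (l₁ l₂ : List Step) : val (l₁ ++ l₂) = val l₁ + val l₂ := by
  simp [val]

def Mz (p : List Step) : Prop := val p = 0 ∧ ∀ q, q <+: p → 0 ≤ val q

def NP (p : List Step) : Prop := ∀ i, ¬ ([Step.U, Step.D] <+: p.drop i)

lemma isMotzkin_iff (p : List Step) : IsMotzkin p ↔ Mz p := by
  constructor
  · rintro ⟨h0, h1⟩
    refine ⟨by simpa [ht, val, List.take_length] using h0, ?_⟩
    intro q hq
    have h2 := h1 q.length hq.length_le
    rw [ht] at h2
    rwa [(List.prefix_iff_eq_take.mp hq).symm] at h2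
  · rintro ⟨h0, h1⟩
    constructor
    · simpa [ht, val, List.take_length] using h0
    · intro i _
      exact h1 (p.take i) (List.take_prefix i p)

lemma cs_zero (p : List Step) : countSubword [Step.U, Step.D] p = 0 ↔ NP p := by
  rw [countSubword, List.length_eq_zero_iff, List.filter_eq_nil_iff]
  constructor
  · intro h i hpre
    by_cases hi : i < p.length
    · exact h i (List.mem_range.mpr hi)
        (by simpa using (List.isPrefixOf_iff_prefix).mpr hpre)
    · rw [List.drop_eq_nil_of_le (le_of_not_gt hi)] at hpre
      simpa using hpre.length_le
  · intro h i _ hpre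
    exact h i ((List.isPrefixOf_iff_prefix).mp (by simpa using hpre))

lemma np_nil : NP [] := by
  intro i h
  simpa using h.length_le

lemma peak_prefix (a : Step) (t : List Step) :
    [Step.U, Step.D] <+: a :: t ↔ a = Step.U ∧ t.head? = some Step.D := by
  rw [List.cons_prefix_cons]
  constructor
  · rintro ⟨rfl, h⟩
    cases t with
    | nil => simpa using h.length_le
    | cons b t' =>
      rw [List.cons_prefix_cons] at h
      exact ⟨rfl, by simp [h.1.symm]⟩
  · rintro ⟨rfl, h⟩
    cases t with
    | nil => simp at h
    | cons b t' =>
      simp at h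
      exact ⟨rfl, by simp [List.cons_prefix_cons, h]⟩

lemma np_cons (a : Step) (t : List Step) :
    NP (a :: t) ↔ ¬(a = Step.U ∧ t.head? = some Step.D) ∧ NP t := by
  rw [← peak_prefix]
  constructor
  · intro h
    exact ⟨h 0, fun i => by simpa using h (i + 1)⟩
  · rintro ⟨h0, h⟩ i
    cases i with
    | zero => exact h0
    | succ i => simpa using h i

lemma np_append (xs ys : List Step) :
    NP (xs ++ ys) ↔ NP xs ∧ NP ys ∧
      ¬(xs.getLast? = some Step.U ∧ ys.head? = some Step.D) := by
  induction xs with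
  | nil => simp [np_nil]
  | cons a xs ih =>
    rw [List.cons_append, np_cons, ih, np_cons]
    cases xs with
    | nil => simp; tauto
    | cons b xs' => simp [List.getLast?_cons_cons]; tauto

lemma mz_nil : Mz [] := ⟨rfl, fun q hq => by simp [List.prefix_nil.mp hq]⟩

lemma prefix_cons_cases {q : List Step} {a : Step} {t : List Step} (h : q <+: a :: t) :
    q = [] ∨ ∃ q', q = a :: q' ∧ q' <+: t := by
  cases q with
  | nil => exact Or.inl rfl
  | cons b q' =>
    rw [List.cons_prefix_cons] at h
    exact Or.inr ⟨q', by rw [h.1], h.2⟩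

lemma mz_consF (t : List Step) : Mz (Step.F :: t) ↔ Mz t := by
  constructor
  · rintro ⟨h0, h1⟩
    refine ⟨by simpa [stepVal] using h0, fun q hq => ?_⟩
    have := h1 (Step.F :: q) (by rw [List.cons_prefix_cons]; exact ⟨rfl, hq⟩)
    simpa [stepVal] using this
  · rintro ⟨h0, h1⟩
    refine ⟨by simp [stepVal, h0], fun q hq => ?_⟩
    rcases prefix_cons_cases hq with rfl | ⟨q', rfl, hq'⟩
    · simp
    · simpa [stepVal] using h1 q' hq'

lemma mz_not_consD (t : List Step) : ¬ Mz (Step.D :: t) := by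
  rintro ⟨_, h1⟩
  have := h1 [Step.D] ⟨t, rfl⟩
  simp [stepVal] at this

lemma mz_head_ne_D {p : List Step} (h : Mz p) : p.head? ≠ some Step.D := by
  cases p with
  | nil => simp
  | cons a t =>
    intro hc
    simp at hc
    subst hc
    exact mz_not_consD t h

lemma mz_getLast_ne_U {p : List Step} (h : Mz p) : p.getLast? ≠ some Step.U := by
  intro hc
  obtain ⟨ys, rfl⟩ := List.getLast?_eq_some_iff.mp hc
  have h0 := h.1
  have h1 := h.2 ys ⟨[Step.U], rfl⟩
  simp [stepVal] at h0
  omega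

lemma prefix_append_split {s q t : List Step} (h : s <+: q ++ t) :
    s <+: q ∨ ∃ s', s = q ++ s' ∧ s' <+: t := by
  rcases le_or_gt s.length q.length with hle | hlt
  · exact Or.inl (List.prefix_of_prefix_length_le h (q.prefix_append t) hle)
  · have hq : q <+: s :=
      List.prefix_of_prefix_length_le (q.prefix_append t) h (le_of_lt hlt)
    obtain ⟨s', rfl⟩ := hq
    exact Or.inr ⟨s', rfl, (List.prefix_append_right_inj q).mp h⟩

lemma mz_build {q r : List Step} (hq : Mz q) (hr : Mz r) :
    Mz (Step.U :: q ++ Step.D :: r) := by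
  constructor
  · simp [stepVal, hq.1, hr.1]
  · intro s hs
    rcases prefix_cons_cases hs with rfl | ⟨s', rfl, hs'⟩
    · simp
    · rcases prefix_append_split hs' with h | ⟨s'', rfl, hs''⟩
      · have := hq.2 s' h
        simp [stepVal]; omega
      · rcases prefix_cons_cases hs'' with rfl | ⟨s₃, rfl, hs₃⟩
        · simp [stepVal, hq.1]
        · have := hr.2 s₃ hs₃
          simp [stepVal, hq.1]; omega

lemma stepVal_ge : ∀ a : Step, -1 ≤ stepVal a := by decide

lemma stepVal_eq_neg_one {a : Step} (h : stepVal a = -1) : a = Step.D := by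
  cases a <;> simp_all [stepVal]

end PeaklessAux

namespace PeaklessAux

lemma mz_U_decomp {t : List Step} (h : Mz (Step.U :: t)) :
    ∃ q r, t = q ++ Step.D :: r ∧ Mz q ∧ Mz r := by
  have hvt : val t = -1 := by
    have := h.1; simp [stepVal] at this; omega
  have hpre : ∀ s, s <+: t → -1 ≤ val s := by
    intro s hs
    have := h.2 (Step.U :: s) (by rw [List.cons_prefix_cons]; exact ⟨rfl, hs⟩)
    simp [stepVal] at this; omega
  have hex : ∃ i, val (t.take i) = -1 := ⟨t.length, by rwa [List.take_length]⟩
  classical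
  obtain ⟨i, hi, hmin⟩ : ∃ i, val (t.take i) = -1 ∧ ∀ j < i, val (t.take j) ≠ -1 :=
    ⟨Nat.find hex, Nat.find_spec hex, fun j hj => Nat.find_min hex hj⟩
  have hile : i ≤ t.length := by
    by_contra hc
    exact hmin t.length (by omega) (by rwa [List.take_length])
  have hi0 : i ≠ 0 := by
    intro hc; rw [hc] at hi; simp at hi
  obtain ⟨k, rfl⟩ : ∃ k, i = k + 1 := ⟨i - 1, by omega⟩
  have hk : k < t.length := by omega
  have htake : t.take (k + 1) = t.take k ++ [t[k]] := by
    rw [List.take_succ, List.getElem?_eq_getElem hk]; rfl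
  have hvk : 0 ≤ val (t.take k) := by
    have h1 := hpre (t.take k) (List.take_prefix k t)
    have h2 := hmin k (by omega)
    omega
  have hstep : stepVal t[k] = -1 ∧ val (t.take k) = 0 := by
    rw [htake] at hi
    rw [val_append] at hi
    have hsing : val [t[k]] = stepVal t[k] := by simp
    rw [hsing] at hi
    have := stepVal_ge t[k]
    constructor <;> omega
  have hD : t[k] = Step.D := stepVal_eq_neg_one hstep.1
  refine ⟨t.take k, t.drop (k + 1), ?_, ?_, ?_⟩
  · conv_lhs => rw [← List.take_append_drop k t]
    rw [List.drop_eq_getElem_cons hk, hD]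
  · refine ⟨hstep.2, fun s hs => ?_⟩
    have hst : s <+: t := hs.trans (List.take_prefix k t)
    have hlen : s.length ≤ k := by
      have := hs.length_le
      simpa [min_eq_left (le_of_lt hk)] using this
    have heq : s = t.take s.length := List.prefix_iff_eq_take.mp hst
    have h1 := hpre s hst
    have h2 := hmin s.length (by omega)
    rw [← heq] at h2
    omega
  · constructor
    · have := congrArg val (List.take_append_drop (k + 1) t)
      rw [val_append, htake] at this
      simp [hD, stepVal, hstep.2] at this
      omega
    · intro s hs
      have hfull : t.take (k + 1) ++ s <+: t := by
        obtain ⟨u, hu⟩ := hs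
        exact ⟨u, by rw [List.append_assoc, hu, List.take_append_drop]⟩
      have := hpre _ hfull
      rw [val_append, htake] at this
      simp [hD, stepVal, hstep.2] at this
      omega

lemma decomp_unique {q r q' r' : List Step} (hq : Mz q) (hq' : Mz q')
    (h : q ++ Step.D :: r = q' ++ Step.D :: r') : q = q' ∧ r = r' := by
  have key : ∀ (q q' r r' : List Step), Mz q → Mz q' →
      q ++ Step.D :: r = q' ++ Step.D :: r' → q.length ≤ q'.length → q = q' := by
    intro q q' r r' hq hq' h hle
    rcases eq_or_lt_of_le hle with heq | hlt
    · exact (List.append_inj h heq).1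
    · exfalso
      have hpre1 : q ++ [Step.D] <+: q' ++ Step.D :: r' :=
        ⟨r, by rw [List.append_assoc, ← h]; simp⟩
      have hpre2 : q ++ [Step.D] <+: q' :=
        List.prefix_of_prefix_length_le hpre1 (q'.prefix_append _) (by simp; omega)
      have := hq'.2 _ hpre2
      simp [stepVal, hq.1] at this
  have hqq : q = q' := by
    rcases le_total q.length q'.length with hle | hle
    · exact key q q' r r' hq hq' h hle
    · exact (key q' q r' r hq' hq h.symm hle).symm
  subst hqq
  have h2 : Step.D :: r = Step.D :: r' := List.append_cancel_left h
  exact ⟨rfl, by injection h2⟩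

lemma np_comp {q r : List Step} (hq : Mz q) :
    NP (Step.U :: q ++ Step.D :: r) ↔ NP q ∧ NP r ∧ q ≠ [] := by
  have h1 : (Step.U :: q ++ Step.D :: r) = (Step.U :: q) ++ (Step.D :: r) := rfl
  rw [h1, np_append, np_cons, np_cons]
  have hh : q.head? ≠ some Step.D := mz_head_ne_D hq
  have hl : q.getLast? ≠ some Step.U := mz_getLast_ne_U hq
  cases q with
  | nil => simp [np_nil]
  | cons a q' =>
    simp only [List.getLast?_cons_cons, List.head?_cons]
    constructor
    · rintro ⟨⟨_, hnpq⟩, ⟨_, hnpr⟩, _⟩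
      exact ⟨hnpq, hnpr, by simp⟩
    · rintro ⟨hnpq, hnpr, _⟩
      refine ⟨⟨?_, hnpq⟩, ⟨?_, hnpr⟩, ?_⟩
      · rintro ⟨_, hc⟩; exact hh hc
      · rintro ⟨hc, _⟩; cases hc
      · rintro ⟨hc, _⟩; exact hl hc

end PeaklessAux

namespace PeaklessAux

def allLists : ℕ → Finset (List Step)
  | 0 => {[]}
  | n + 1 => Finset.univ.biUnion fun s : Step => (allLists n).image (s :: ·)

lemma mem_allLists : ∀ (n : ℕ) (l : List Step), l ∈ allLists n ↔ l.length = n := by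
  intro n
  induction n with
  | zero => intro l; simp [allLists, List.length_eq_zero_iff]
  | succ n ih =>
    intro l
    cases l with
    | nil => simp [allLists]
    | cons a t => simp [allLists, ih]

open Classical in
noncomputable def okF (n : ℕ) : Finset (List Step) :=
  (allLists n).filter (fun p => Mz p ∧ NP p)

lemma mem_okF {n : ℕ} {p : List Step} : p ∈ okF n ↔ p.length = n ∧ Mz p ∧ NP p := by
  simp [okF, mem_allLists]

lemma peakless_eq (n : ℕ) : peakless n = (okF n).card := by
  rw [peakless, ← Nat.card_eq_finsetCard]
  apply Nat.card_congr
  apply Equiv.subtypeEquivRight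
  intro p
  rw [mem_okF, isMotzkin_iff, cs_zero]

lemma okF_zero : okF 0 = {[]} := by
  ext p
  simp [mem_okF, List.length_eq_zero_iff]
  rintro rfl
  exact ⟨mz_nil, np_nil⟩

lemma okF_consF {n : ℕ} {t : List Step} :
    Step.F :: t ∈ okF (n + 1) ↔ t ∈ okF n := by
  rw [mem_okF, mem_okF, mz_consF, np_cons]
  simp

lemma card_rec (n : ℕ) : (okF (n + 1)).card =
    (okF n).card + ∑ i ∈ Finset.range n,
      if i = 0 then 0 else (okF i).card * (okF (n - 1 - i)).card := by
  classical
  set A : Finset (List Step) := (okF n).image (Step.F :: ·) with hA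
  set B : Finset (List Step) := (Finset.range n).biUnion fun i =>
    if i = 0 then ∅ else
      ((okF i) ×ˢ (okF (n - 1 - i))).image
        (fun pr => Step.U :: (pr.1 ++ Step.D :: pr.2)) with hB
  have memB : ∀ p, p ∈ B ↔ ∃ i ∈ Finset.range n, i ≠ 0 ∧
      ∃ q r, q ∈ okF i ∧ r ∈ okF (n - 1 - i) ∧ p = Step.U :: (q ++ Step.D :: r) := by
    intro p
    rw [hB, Finset.mem_biUnion]
    constructor
    · rintro ⟨i, hi, hp⟩
      rcases eq_or_ne i 0 with rfl | hne
      · simp at hp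
      · rw [if_neg hne, Finset.mem_image] at hp
        obtain ⟨⟨q, r⟩, hqr, hp⟩ := hp
        rw [Finset.mem_product] at hqr
        exact ⟨i, hi, hne, q, r, hqr.1, hqr.2, hp.symm⟩
    · rintro ⟨i, hi, hne, q, r, hq, hr, rfl⟩
      refine ⟨i, hi, ?_⟩
      rw [if_neg hne, Finset.mem_image]
      exact ⟨(q, r), Finset.mem_product.mpr ⟨hq, hr⟩, rfl⟩
  have hsplit : okF (n + 1) = A ∪ B := by
    ext p
    rw [Finset.mem_union]
    constructor
    · intro hp
      have hp' := mem_okF.mp hp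
      obtain ⟨hlen, hmz, hnp⟩ := hp'
      cases p with
      | nil => simp at hlen
      | cons a t =>
        cases a with
        | F =>
          left
          rw [hA, Finset.mem_image]
          exact ⟨t, okF_consF.mp hp, rfl⟩
        | D => exact absurd hmz (mz_not_consD t)
        | U =>
          right
          obtain ⟨q, r, rfl, hq, hr⟩ := mz_U_decomp hmz
          have hnp' := (np_comp hq).mp (by simpa using hnp)
          rw [memB]
          have hlen' : q.length + r.length + 2 = n + 1 := by
            simp at hlen; omega
          have hq1 : 1 ≤ q.length := by
            cases q with
            | nil => exact absurd rfl hnp'.2.2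
            | cons _ _ => simp
          refine ⟨q.length, Finset.mem_range.mpr (by omega), by omega, q, r,
            mem_okF.mpr ⟨rfl, hq, hnp'.1⟩,
            mem_okF.mpr ⟨by omega, hr, hnp'.2.1⟩, by simp⟩
    · rintro (hp | hp)
      · rw [hA, Finset.mem_image] at hp
        obtain ⟨t, ht, rfl⟩ := hp
        exact okF_consF.mpr ht
      · rw [memB] at hp
        obtain ⟨i, hi, hne, q, r, hq, hr, rfl⟩ := hp
        rw [Finset.mem_range] at hi
        obtain ⟨hql, hqmz, hqnp⟩ := mem_okF.mp hq
        obtain ⟨hrl, hrmz, hrnp⟩ := mem_okF.mp hr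
        refine mem_okF.mpr ⟨by simp [hql, hrl]; omega, mz_build hqmz hrmz, ?_⟩
        exact (np_comp hqmz).mpr
          ⟨hqnp, hrnp, by intro hc; rw [hc] at hql; simp at hql; omega⟩
  have hdisj : Disjoint A B := by
    rw [Finset.disjoint_left]
    intro p hpA hpB
    rw [hA, Finset.mem_image] at hpA
    obtain ⟨t, _, rfl⟩ := hpA
    rw [memB] at hpB
    obtain ⟨_, _, _, _, _, _, _, hc⟩ := hpB
    simp at hc
  have hcardA : A.card = (okF n).card := by
    rw [hA]
    apply Finset.card_image_of_injOn
    intro x _ y _ hxy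
    simpa using hxy
  have hcardB : B.card = ∑ i ∈ Finset.range n,
      if i = 0 then 0 else (okF i).card * (okF (n - 1 - i)).card := by
    rw [hB, Finset.card_biUnion]
    · apply Finset.sum_congr rfl
      intro i _
      rcases eq_or_ne i 0 with rfl | hne
      · simp
      · rw [if_neg hne, if_neg hne]
        rw [Finset.card_image_of_injOn, Finset.card_product]
        rintro ⟨q, r⟩ hqr ⟨q', r'⟩ hqr' heq
        rw [Finset.mem_coe, Finset.mem_product] at hqr hqr'
        simp only [List.cons.injEq, true_and] at heq
        have := decomp_unique (mem_okF.mp hqr.1).2.1 (mem_okF.mp hqr'.1).2.1 heq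
        exact Prod.ext this.1 this.2
    · intro i hi j hj hij
      rw [Function.onFun, Finset.disjoint_left]
      intro p hpi hpj
      rcases eq_or_ne i 0 with rfl | hi0
      · simp at hpi
      rcases eq_or_ne j 0 with rfl | hj0
      · simp at hpj
      rw [if_neg hi0, Finset.mem_image] at hpi
      rw [if_neg hj0, Finset.mem_image] at hpj
      obtain ⟨⟨q, r⟩, hqr, hp1⟩ := hpi
      obtain ⟨⟨q', r'⟩, hqr', hp2⟩ := hpj
      rw [Finset.mem_product] at hqr hqr'
      rw [← hp2] at hp1
      simp only [List.cons.injEq, true_and] at hp1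
      have := decomp_unique (mem_okF.mp hqr.1).2.1 (mem_okF.mp hqr'.1).2.1 hp1
      apply hij
      rw [← (mem_okF.mp hqr.1).1, ← (mem_okF.mp hqr'.1).1, this.1]
  rw [hsplit, Finset.card_union_of_disjoint hdisj, hcardA, hcardB]

lemma peakless_zero : peakless 0 = 1 := by
  rw [peakless_eq, okF_zero]; rfl

lemma peakless_rec (n : ℕ) : peakless (n + 1) =
    peakless n + ∑ i ∈ Finset.range n,
      if i = 0 then 0 else peakless i * peakless (n - 1 - i) := by
  simp only [peakless_eq]
  exact card_rec n

end PeaklessAux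

namespace PeaklessAux

lemma p1 : peakless 1 = 1 := by
  have := peakless_rec 0; simpa [peakless_zero] using this
lemma p2 : peakless 2 = 1 := by
  have := peakless_rec 1
  simpa [Finset.sum_range_succ, p1] using this
lemma p3 : peakless 3 = 2 := by
  have := peakless_rec 2
  simp [Finset.sum_range_succ, p1, p2, peakless_zero] at this
  omega
lemma p4 : peakless 4 = 4 := by
  have := peakless_rec 3
  simp [Finset.sum_range_succ, p1, p2, p3, peakless_zero] at this
  omega
lemma p5 : peakless 5 = 8 := by
  have := peakless_rec 4
  simp [Finset.sum_range_succ, p1, p2, p3, p4, peakless_zero] at this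
  omega
lemma p6 : peakless 6 = 17 := by
  have := peakless_rec 5
  simp [Finset.sum_range_succ, p1, p2, p3, p4, p5, peakless_zero] at this
  omega
lemma p7 : peakless 7 = 37 := by
  have := peakless_rec 6
  simp [Finset.sum_range_succ, p1, p2, p3, p4, p5, p6, peakless_zero] at this
  omega
lemma p8 : peakless 8 = 82 := by
  have := peakless_rec 7
  simp [Finset.sum_range_succ, p1, p2, p3, p4, p5, p6, p7, peakless_zero] at this
  omega
lemma p9 : peakless 9 = 185 := by
  have := peakless_rec 8
  simp [Finset.sum_range_succ, p1, p2, p3, p4, p5, p6, p7, p8, peakless_zero] at this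
  omega

lemma gf_eq : PowerSeries.X ^ 2 * Fpeakless ^ 2
    - (1 - PowerSeries.X + PowerSeries.X ^ 2) * Fpeakless + 1 = 0 := by
  have hcoeff : ∀ k, PowerSeries.coeff k Fpeakless = (peakless k : ℚ) := fun k => by
    simp [Fpeakless]
  have h1 : PowerSeries.X ^ 2 * Fpeakless ^ 2
      - (1 - PowerSeries.X + PowerSeries.X ^ 2) * Fpeakless + 1
      = (Fpeakless * Fpeakless) * PowerSeries.X ^ 2
        - (Fpeakless - Fpeakless * PowerSeries.X ^ 1 + Fpeakless * PowerSeries.X ^ 2) + 1 := by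
    ring
  rw [h1]
  ext n
  simp only [map_add, map_sub, map_zero, PowerSeries.coeff_mul_X_pow',
    PowerSeries.coeff_one, hcoeff]
  match n with
  | 0 => norm_num [peakless_zero]
  | 1 => norm_num [p1, peakless_zero]
  | (m + 2) =>
    rw [if_pos (by omega : 2 ≤ m + 2), if_pos (by omega : 1 ≤ m + 2),
      if_pos (by omega : 2 ≤ m + 2), if_neg (by omega : ¬ m + 2 = 0)]
    rw [show m + 2 - 2 = m from rfl, show m + 2 - 1 = m + 1 from rfl]
    rw [PowerSeries.coeff_mul, Finset.Nat.sum_antidiagonal_eq_sum_range_succ_mk]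
    simp only [hcoeff]
    have hrecq : (peakless (m + 2) : ℚ) = (peakless (m + 1) : ℚ)
        + ∑ i ∈ Finset.range (m + 1),
            (if i = 0 then 0 else (peakless i : ℚ) * peakless (m - i)) := by
      rw [show m + 2 = (m + 1) + 1 from rfl, peakless_rec (m + 1)]
      push_cast [Nat.cast_sum, apply_ite (fun x : ℕ => (x : ℚ)), Nat.add_sub_cancel]
      rfl
    have hsum : ∑ k ∈ Finset.range (m + 1), (peakless k : ℚ) * peakless (m - k)
        = (peakless 0 : ℚ) * peakless m
          + ∑ k ∈ Finset.range (m + 1),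
              (if k = 0 then 0 else (peakless k : ℚ) * peakless (m - k)) := by
      have hterm : ∀ k ∈ Finset.range (m + 1),
          ((if k = 0 then (peakless 0 : ℚ) * peakless m else 0)
            + (if k = 0 then 0 else (peakless k : ℚ) * peakless (m - k)))
          = (peakless k : ℚ) * peakless (m - k) := by
        intro k _
        by_cases hk : k = 0 <;> simp [hk]
      rw [← Finset.sum_congr rfl hterm, Finset.sum_add_distrib,
        Finset.sum_ite_eq' (Finset.range (m + 1)) 0]
      simp
    rw [hsum, peakless_zero]
    push_cast
    linarith [hrecq]

end PeaklessAux

/-- F satisfies x²F² − (1 − x + x²)F + 1 = 0, and its coefficients begin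
1, 1, 1, 2, 4, 8, 17, 37, 82, 185. -/
theorem peakless_gf :
    (PowerSeries.X ^ 2 * Fpeakless ^ 2
        - (1 - PowerSeries.X + PowerSeries.X ^ 2) * Fpeakless + 1 = 0)
      ∧ peakless 0 = 1 ∧ peakless 1 = 1 ∧ peakless 2 = 1 ∧ peakless 3 = 2
      ∧ peakless 4 = 4 ∧ peakless 5 = 8 ∧ peakless 6 = 17 ∧ peakless 7 = 37
      ∧ peakless 8 = 82 ∧ peakless 9 = 185 :=
  ⟨PeaklessAux.gf_eq, PeaklessAux.peakless_zero, PeaklessAux.p1, PeaklessAux.p2,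
    PeaklessAux.p3, PeaklessAux.p4, PeaklessAux.p5, PeaklessAux.p6, PeaklessAux.p7,
    PeaklessAux.p8, PeaklessAux.p9⟩
end
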